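/- Let V be a finite-dimensional real inner product space and F a commuting family of skew-symmetric endomorphisms of V. Then there exists an orthonormal basis {e_1, f_1, …, e_n, f_n} ∪ (basis of the common kernel) of V in which every T ∈ F is represented by a block-diagonal matrix with 2×2 blocks of the form [[0, -λ_i(T)], [λ_i(T), 0]] on span{e_i, f_i}. -/

import Mathlib

open Submodule Module

section Helpers
variable {V : Type*} [NormedAddCommGroup V] [InnerProductSpace ℝ V]

/-- A minimal nonzero invariant subspace exists. -/
lemma exists_minimal_invariant [FiniteDimensional ℝ V] [Nontrivial V] (F : Set (V →ₗ[ℝ] V)) :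
    ∃ W : Submodule ℝ V, W ≠ ⊥ ∧ (∀ T ∈ F, ∀ x ∈ W, T x ∈ W) ∧
      ∀ W' : Submodule ℝ V, W' ≠ ⊥ → (∀ T ∈ F, ∀ x ∈ W', T x ∈ W') → W' ≤ W → W' = W := by
  classical
  set P : Set ℕ := {d | ∃ W : Submodule ℝ V, W ≠ ⊥ ∧ (∀ T ∈ F, ∀ x ∈ W, T x ∈ W) ∧
      finrank ℝ W = d} with hP
  have hPne : P.Nonempty := ⟨finrank ℝ (⊤ : Submodule ℝ V), ⊤, by simp,
    fun T _ x _ => trivial, rfl⟩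
  obtain ⟨W, hW0, hWinv, hWd⟩ := Nat.sInf_mem hPne
  refine ⟨W, hW0, hWinv, fun W' h0 hinv hle => ?_⟩
  refine Submodule.eq_of_le_of_finrank_le hle ?_
  rw [hWd]
  exact Nat.sInf_le ⟨W', h0, hinv, rfl⟩
end Helpers

section Helpers2
variable {V : Type*} [NormedAddCommGroup V] [InnerProductSpace ℝ V] [FiniteDimensional ℝ V]

lemma sq_scalar_on_minimal (F : Set (V →ₗ[ℝ] V))
    (hcomm : ∀ S ∈ F, ∀ T ∈ F, S ∘ₗ T = T ∘ₗ S)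
    (hskew : ∀ T ∈ F, ∀ x y : V, (inner ℝ (T x) y : ℝ) = -(inner ℝ x (T y) : ℝ))
    (W : Submodule ℝ V) (hW0 : W ≠ ⊥) (hWinv : ∀ T ∈ F, ∀ x ∈ W, T x ∈ W)
    (hWmin : ∀ W' : Submodule ℝ V, W' ≠ ⊥ → (∀ T ∈ F, ∀ x ∈ W', T x ∈ W') → W' ≤ W → W' = W)
    {S : V →ₗ[ℝ] V} (hS : S ∈ F) :
    ∃ r : ℝ, r ≤ 0 ∧ ∀ x ∈ W, S (S x) = r • x := by
  classical
  haveI : Nontrivial W := Submodule.nontrivial_iff_ne_bot.mpr hW0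
  have hres : ∀ x ∈ W, (S ∘ₗ S) x ∈ W := fun x hx => hWinv S hS _ (hWinv S hS x hx)
  set SW : W →ₗ[ℝ] W := (S ∘ₗ S).restrict hres with hSW
  have hSWcoe : ∀ x : W, (SW x : V) = S (S (x : V)) := fun x => rfl
  have hsym : SW.IsSymmetric := by
    intro x y
    rw [Submodule.coe_inner, Submodule.coe_inner, hSWcoe, hSWcoe, hskew S hS, hskew S hS,
      neg_neg]
  obtain ⟨r, hr⟩ : ∃ r : ℝ, Module.End.HasEigenvalue SW r :=
    ⟨_, hsym.hasEigenvalue_iSup_of_finiteDimensional⟩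
  obtain ⟨v, hv, hv0⟩ := hr.exists_hasEigenvector
  have hvW : (v : V) ∈ W := v.2
  have hveq : S (S (v : V)) = r • (v : V) := by
    have h := hv
    rw [Module.End.mem_eigenspace_iff] at h
    calc S (S (v : V)) = ((SW v : W) : V) := rfl
    _ = ((r • v : W) : V) := by rw [h]
    _ = r • (v : V) := rfl
  have hv0' : (v : V) ≠ 0 := fun h => hv0 (Subtype.ext h)
  have hcomm' : ∀ T ∈ F, ∀ y : V, S (T y) = T (S y) := by
    intro T hT y
    have h := hcomm S hS T hT
    exact congrFun (congrArg DFunLike.coe h) y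
  have hker_iff : ∀ y : V, y ∈ LinearMap.ker (S ∘ₗ S - r • LinearMap.id) ↔ S (S y) = r • y := by
    intro y
    simp [LinearMap.mem_ker, LinearMap.sub_apply, LinearMap.comp_apply,
      LinearMap.smul_apply, LinearMap.id_apply, sub_eq_zero]
  have hrle : r ≤ 0 := by
    have h1 : (inner ℝ (S (S (v:V))) (v:V) : ℝ) = -(inner ℝ (S (v:V)) (S (v:V)) : ℝ) := by
      rw [hskew S hS (S (v:V)) (v:V), real_inner_comm, hskew S hS]
    rw [hveq, real_inner_smul_left] at h1
    have h2 : (inner ℝ (v:V) (v:V) : ℝ) ≠ 0 := fun h => hv0' (inner_self_eq_zero.mp h)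
    have h2' : (0:ℝ) ≤ inner ℝ (v:V) (v:V) := real_inner_self_nonneg
    have h3 : (0:ℝ) ≤ inner ℝ (S (v:V)) (S (v:V)) := real_inner_self_nonneg
    nlinarith [h2'.lt_of_ne (Ne.symm h2)]
  set K : Submodule ℝ V := (LinearMap.ker (S ∘ₗ S - r • LinearMap.id)) ⊓ W with hK
  have hKinv : ∀ T ∈ F, ∀ x ∈ K, T x ∈ K := by
    intro T hT x hx
    obtain ⟨hx1, hx2⟩ := Submodule.mem_inf.mp hx
    rw [hker_iff] at hx1
    refine Submodule.mem_inf.mpr ⟨?_, hWinv T hT x hx2⟩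
    rw [hker_iff, hcomm' T hT x, hcomm' T hT (S x), hx1, map_smul]
  have hK0 : K ≠ ⊥ := by
    intro h
    have hm : (v : V) ∈ K := Submodule.mem_inf.mpr ⟨(hker_iff _).mpr hveq, hvW⟩
    rw [h] at hm
    exact hv0' hm
  have hKW : K = W := hWmin K hK0 hKinv inf_le_right
  refine ⟨r, hrle, fun x hx => ?_⟩
  have hm : x ∈ K := by rw [hKW]; exact hx
  exact (hker_iff x).mp (Submodule.mem_inf.mp hm).1
end Helpers2

section Helpers3
variable {V : Type*} [NormedAddCommGroup V] [InnerProductSpace ℝ V] [FiniteDimensional ℝ V]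

lemma scalar_on_minimal (F : Set (V →ₗ[ℝ] V))
    (hcomm : ∀ S ∈ F, ∀ T ∈ F, S ∘ₗ T = T ∘ₗ S)
    (hskew : ∀ T ∈ F, ∀ x y : V, (inner ℝ (T x) y : ℝ) = -(inner ℝ x (T y) : ℝ))
    (W : Submodule ℝ V) (hW0 : W ≠ ⊥) (hWinv : ∀ T ∈ F, ∀ x ∈ W, T x ∈ W)
    (hWmin : ∀ W' : Submodule ℝ V, W' ≠ ⊥ → (∀ T ∈ F, ∀ x ∈ W', T x ∈ W') → W' ≤ W → W' = W)
    {T₀ : V →ₗ[ℝ] V} (hT₀ : T₀ ∈ F) {lam : ℝ} (hlam : 0 < lam)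
    (hT₀sq : ∀ x ∈ W, T₀ (T₀ x) = (-(lam^2)) • x)
    {S : V →ₗ[ℝ] V} (hS : S ∈ F) :
    ∃ s : ℝ, ∀ x ∈ W, S x = s • T₀ x := by
  classical
  have hcomm' : ∀ T ∈ F, ∀ R ∈ F, ∀ y : V, T (R y) = R (T y) := by
    intro T hT R hR y
    exact congrFun (congrArg DFunLike.coe (hcomm T hT R hR)) y
  obtain ⟨r, hrle, hSsq⟩ := sq_scalar_on_minimal F hcomm hskew W hW0 hWinv hWmin hS
  by_cases hr0 : r = 0
  · refine ⟨0, fun x hx => ?_⟩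
    have h1 : S (S x) = 0 := by rw [hSsq x hx, hr0, zero_smul]
    have h2 : (inner ℝ (S x) (S x) : ℝ) = 0 := by
      rw [hskew S hS, h1, inner_zero_right, neg_zero]
    rw [inner_self_eq_zero.mp h2, zero_smul]
  · set mu : ℝ := Real.sqrt (-r) with hmu
    have hrneg : r < 0 := lt_of_le_of_ne hrle hr0
    have hmupos : 0 < mu := Real.sqrt_pos.mpr (by linarith)
    have hmusq : mu ^ 2 = -r := Real.sq_sqrt (by linarith)
    have hSsq' : ∀ x ∈ W, S (S x) = (-(mu^2)) • x := by
      intro x hx; rw [hSsq x hx, hmusq]; ring_nf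
    have hker2 : ∀ y : V, y ∈ LinearMap.ker (lam • S - mu • T₀) ↔
        lam • S y = mu • T₀ y := by
      intro y
      simp [LinearMap.mem_ker, LinearMap.sub_apply, LinearMap.smul_apply, sub_eq_zero]
    set K : Submodule ℝ V := (LinearMap.ker (lam • S - mu • T₀)) ⊓ W with hkK
    by_cases hKbot : K = ⊥
    · -- S = -(mu/lam) T₀ on W
      have key : ∀ x ∈ W, T₀ (S x) = (lam*mu) • x := by
        intro x hx
        set u : V := (lam*mu) • x - T₀ (S x) with hu
        have huW : u ∈ W := Submodule.sub_mem _ (Submodule.smul_mem _ _ hx)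
          (hWinv T₀ hT₀ _ (hWinv S hS x hx))
        have huker : lam • S u = mu • T₀ u := by
          have e1 : S u = (lam*mu) • S x - T₀ (S (S x)) := by
            rw [hu, map_sub, map_smul, hcomm' S hS T₀ hT₀]
          have e2 : T₀ u = (lam*mu) • T₀ x - T₀ (T₀ (S x)) := by
            rw [hu, map_sub, map_smul]
          rw [e1, e2, hSsq' x hx, hT₀sq (S x) (hWinv S hS x hx), map_smul]
          module
        have : u ∈ K := Submodule.mem_inf.mpr ⟨(hker2 u).mpr huker, huW⟩
        rw [hKbot] at this
        have hu0 : u = 0 := this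
        rw [hu, sub_eq_zero] at hu0
        exact hu0.symm
      refine ⟨(-(lam^2))⁻¹ * (lam*mu), fun x hx => ?_⟩
      have h1 : T₀ (T₀ (S x)) = (lam*mu) • T₀ x := by
        rw [key x hx, map_smul]
      have h2 : (-(lam^2)) • S x = (lam*mu) • T₀ x := by
        rw [← hT₀sq (S x) (hWinv S hS x hx), h1]
      have hne : (-(lam^2)) ≠ 0 := neg_ne_zero.mpr (pow_ne_zero 2 hlam.ne')
      calc S x = (-(lam^2))⁻¹ • ((-(lam^2)) • S x) := by
            rw [smul_smul, inv_mul_cancel₀ hne, one_smul]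
        _ = (-(lam^2))⁻¹ • ((lam*mu) • T₀ x) := by rw [h2]
        _ = ((-(lam^2))⁻¹ * (lam*mu)) • T₀ x := by rw [smul_smul]
    · -- K = W, so S = (mu/lam) T₀ on W
      have hKinv : ∀ T ∈ F, ∀ x ∈ K, T x ∈ K := by
        intro T hT x hx
        obtain ⟨hx1, hx2⟩ := Submodule.mem_inf.mp hx
        rw [hker2] at hx1
        refine Submodule.mem_inf.mpr ⟨(hker2 _).mpr ?_, hWinv T hT x hx2⟩
        calc lam • S (T x) = T (lam • S x) := by rw [hcomm' S hS T hT, map_smul]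
          _ = T (mu • T₀ x) := by rw [hx1]
          _ = mu • T₀ (T x) := by rw [map_smul, hcomm' T₀ hT₀ T hT]
      have hKW : K = W := hWmin K hKbot hKinv inf_le_right
      refine ⟨lam⁻¹ * mu, fun x hx => ?_⟩
      have hm : x ∈ K := by rw [hKW]; exact hx
      have h1 : lam • S x = mu • T₀ x := (hker2 x).mp (Submodule.mem_inf.mp hm).1
      calc S x = lam⁻¹ • (lam • S x) := by
            rw [smul_smul, inv_mul_cancel₀ hlam.ne', one_smul]
        _ = lam⁻¹ • (mu • T₀ x) := by rw [h1]
        _ = (lam⁻¹ * mu) • T₀ x := by rw [smul_smul]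
end Helpers3

section Helpers4
variable {V : Type*} [NormedAddCommGroup V] [InnerProductSpace ℝ V] [FiniteDimensional ℝ V]

lemma structure_on_minimal (F : Set (V →ₗ[ℝ] V))
    (hcomm : ∀ S ∈ F, ∀ T ∈ F, S ∘ₗ T = T ∘ₗ S)
    (hskew : ∀ T ∈ F, ∀ x y : V, (inner ℝ (T x) y : ℝ) = -(inner ℝ x (T y) : ℝ))
    (W : Submodule ℝ V) (hW0 : W ≠ ⊥) (hWinv : ∀ T ∈ F, ∀ x ∈ W, T x ∈ W)
    (hWmin : ∀ W' : Submodule ℝ V, W' ≠ ⊥ → (∀ T ∈ F, ∀ x ∈ W', T x ∈ W') → W' ≤ W → W' = W) :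
    (∀ T ∈ F, ∀ x ∈ W, T x = 0) ∨
    ∃ e₀ f₀ : V, e₀ ∈ W ∧ f₀ ∈ W ∧ Submodule.span ℝ {e₀, f₀} = W ∧
      (inner ℝ e₀ e₀ : ℝ) = 1 ∧ (inner ℝ f₀ f₀ : ℝ) = 1 ∧ (inner ℝ e₀ f₀ : ℝ) = 0 ∧
      ∀ T ∈ F, ∃ s : ℝ, T e₀ = s • f₀ ∧ T f₀ = (-s) • e₀ := by
  classical
  by_cases hz : ∀ T ∈ F, ∀ x ∈ W, T x = 0
  · exact Or.inl hz
  right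
  push_neg at hz
  obtain ⟨T₀, hT₀F, x₀, hx₀W, hx₀⟩ := hz
  obtain ⟨r₀, hr₀le, hT₀sq⟩ := sq_scalar_on_minimal F hcomm hskew W hW0 hWinv hWmin hT₀F
  have hr₀ : r₀ ≠ 0 := by
    intro h
    have h1 : T₀ (T₀ x₀) = 0 := by rw [hT₀sq x₀ hx₀W, h, zero_smul]
    have h2 : (inner ℝ (T₀ x₀) (T₀ x₀) : ℝ) = 0 := by
      rw [hskew T₀ hT₀F, h1, inner_zero_right, neg_zero]
    exact hx₀ (inner_self_eq_zero.mp h2)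
  have hr₀neg : r₀ < 0 := lt_of_le_of_ne hr₀le hr₀
  set lam : ℝ := Real.sqrt (-r₀) with hlamdef
  have hlam : 0 < lam := Real.sqrt_pos.mpr (by linarith)
  have hlamsq : lam ^ 2 = -r₀ := Real.sq_sqrt (by linarith)
  have hT₀sq' : ∀ x ∈ W, T₀ (T₀ x) = (-(lam^2)) • x := by
    intro x hx; rw [hT₀sq x hx, hlamsq]; ring_nf
  have hx₀0 : x₀ ≠ 0 := by rintro rfl; exact hx₀ (map_zero T₀)
  set e₀ : V := ‖x₀‖⁻¹ • x₀ with he₀def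
  have he₀W : e₀ ∈ W := Submodule.smul_mem _ _ hx₀W
  have hxne : ‖x₀‖ ≠ 0 := norm_ne_zero_iff.mpr hx₀0
  have hne₀ : ‖e₀‖ = 1 := by
    rw [he₀def, norm_smul, norm_inv, norm_norm, inv_mul_cancel₀ hxne]
  have he₀n : (inner ℝ e₀ e₀ : ℝ) = 1 := by
    rw [real_inner_self_eq_norm_mul_norm, hne₀, one_mul]
  have he₀0 : e₀ ≠ 0 := by
    intro h; rw [h, inner_zero_left] at he₀n; exact one_ne_zero he₀n.symm
  set f₀ : V := lam⁻¹ • T₀ e₀ with hf₀def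
  have hf₀W : f₀ ∈ W := Submodule.smul_mem _ _ (hWinv T₀ hT₀F _ he₀W)
  have hT₀e₀ : T₀ e₀ = lam • f₀ := by
    rw [hf₀def, smul_smul, mul_inv_cancel₀ hlam.ne', one_smul]
  have hT₀f₀ : T₀ f₀ = (-lam) • e₀ := by
    rw [hf₀def, map_smul, hT₀sq' e₀ he₀W, smul_smul]
    congr 1
    field_simp
  have hinnTe : (inner ℝ e₀ (T₀ e₀) : ℝ) = 0 := by
    have h1 := hskew T₀ hT₀F e₀ e₀
    have h2 : (inner ℝ e₀ (T₀ e₀) : ℝ) = inner ℝ (T₀ e₀) e₀ := real_inner_comm _ _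
    linarith [h1, h2.symm ▸ h1]
  have hf₀n : (inner ℝ f₀ f₀ : ℝ) = 1 := by
    rw [hf₀def, real_inner_smul_left, real_inner_smul_right, hskew T₀ hT₀F,
      hT₀sq' e₀ he₀W, real_inner_smul_right, he₀n]
    field_simp
  have hef : (inner ℝ e₀ f₀ : ℝ) = 0 := by
    rw [hf₀def, real_inner_smul_right, hinnTe, mul_zero]
  -- every T in F acts as a scalar times T₀ on W
  have hTblock : ∀ T ∈ F, ∃ s : ℝ, T e₀ = s • f₀ ∧ T f₀ = (-s) • e₀ := by
    intro T hT
    obtain ⟨s', hs'⟩ := scalar_on_minimal F hcomm hskew W hW0 hWinv hWmin hT₀F hlam hT₀sq' hT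
    refine ⟨s' * lam, ?_, ?_⟩
    · rw [hs' e₀ he₀W, hT₀e₀, smul_smul]
    · rw [hs' f₀ hf₀W, hT₀f₀, smul_smul]
      congr 1
      ring
  -- span {e₀, f₀} = W by minimality
  have hUle : Submodule.span ℝ {e₀, f₀} ≤ W := by
    rw [Submodule.span_le]
    intro z hz
    rcases hz with rfl | hz
    · exact he₀W
    · rw [Set.mem_singleton_iff] at hz; rw [hz]; exact hf₀W
  have hU0 : Submodule.span ℝ ({e₀, f₀} : Set V) ≠ ⊥ := by
    intro h
    have : e₀ ∈ Submodule.span ℝ ({e₀, f₀} : Set V) :=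
      Submodule.subset_span (Set.mem_insert _ _)
    rw [h] at this
    exact he₀0 this
  have hUinv : ∀ T ∈ F, ∀ x ∈ Submodule.span ℝ ({e₀, f₀} : Set V),
      T x ∈ Submodule.span ℝ ({e₀, f₀} : Set V) := by
    intro T hT x hx
    obtain ⟨a, b, hab⟩ := Submodule.mem_span_pair.mp hx
    obtain ⟨s, hs1, hs2⟩ := hTblock T hT
    rw [← hab, map_add, map_smul, hs1, map_smul, hs2]
    refine Submodule.add_mem _ (Submodule.smul_mem _ _ ?_) (Submodule.smul_mem _ _ ?_)
    · exact Submodule.smul_mem _ _ (Submodule.subset_span (Set.mem_insert_of_mem _ rfl))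
    · exact Submodule.smul_mem _ _ (Submodule.subset_span (Set.mem_insert _ _))
  have hUW : Submodule.span ℝ ({e₀, f₀} : Set V) = W := hWmin _ hU0 hUinv hUle
  exact ⟨e₀, f₀, he₀W, hf₀W, hUW, he₀n, hf₀n, hef, hTblock⟩
end Helpers4

universe u

def BlockData {V : Type u} [NormedAddCommGroup V] [InnerProductSpace ℝ V]
    (F : Set (V →ₗ[ℝ] V)) : Prop :=
  ∃ (n m : ℕ) (e f : Fin n → V) (g : Fin m → V),
    (∀ i j, (inner ℝ (e i) (e j) : ℝ) = if i = j then 1 else 0) ∧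
    (∀ i j, (inner ℝ (f i) (f j) : ℝ) = if i = j then 1 else 0) ∧
    (∀ i j, (inner ℝ (g i) (g j) : ℝ) = if i = j then 1 else 0) ∧
    (∀ i j, (inner ℝ (e i) (f j) : ℝ) = 0) ∧
    (∀ i j, (inner ℝ (e i) (g j) : ℝ) = 0) ∧
    (∀ i j, (inner ℝ (f i) (g j) : ℝ) = 0) ∧
    Submodule.span ℝ (Set.range e ∪ Set.range f ∪ Set.range g) = ⊤ ∧
    (∀ T ∈ F, ∀ j, T (g j) = 0) ∧
    (∀ T ∈ F, ∀ i, ∃ c : ℝ, T (e i) = c • f i ∧ T (f i) = (-c) • e i)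

lemma blockdata_of_subsingleton {V : Type u} [NormedAddCommGroup V] [InnerProductSpace ℝ V]
    [FiniteDimensional ℝ V] (hfr : Module.finrank ℝ V = 0)
    (F : Set (V →ₗ[ℝ] V)) : BlockData F := by
  haveI : Subsingleton V := Module.finrank_zero_iff.mp hfr
  refine ⟨0, 0, Fin.elim0, Fin.elim0, Fin.elim0, fun i => i.elim0, fun i => i.elim0,
    fun i => i.elim0, fun i => i.elim0, fun i => i.elim0, fun i => i.elim0, ?_,
    fun T _ j => j.elim0, fun T _ i => i.elim0⟩
  refine Submodule.eq_top_iff'.mpr fun x => ?_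
  rw [Subsingleton.elim x 0]
  exact Submodule.zero_mem _

lemma step_orthogonal {V : Type u} [NormedAddCommGroup V] [InnerProductSpace ℝ V]
    [FiniteDimensional ℝ V] {N : ℕ}
    (IH : ∀ {V' : Type u} [NormedAddCommGroup V'] [InnerProductSpace ℝ V']
      [FiniteDimensional ℝ V'], Module.finrank ℝ V' ≤ N → ∀ (F' : Set (V' →ₗ[ℝ] V')),
      (∀ S ∈ F', ∀ T ∈ F', S ∘ₗ T = T ∘ₗ S) →
      (∀ T ∈ F', ∀ x y : V', (inner ℝ (T x) y : ℝ) = -(inner ℝ x (T y) : ℝ)) →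
      BlockData F')
    (F : Set (V →ₗ[ℝ] V))
    (hcomm : ∀ S ∈ F, ∀ T ∈ F, S ∘ₗ T = T ∘ₗ S)
    (hskew : ∀ T ∈ F, ∀ x y : V, (inner ℝ (T x) y : ℝ) = -(inner ℝ x (T y) : ℝ))
    (hN : Module.finrank ℝ V ≤ N + 1)
    (Z : Submodule ℝ V) (hZ0 : Z ≠ ⊥) (hZinv : ∀ T ∈ F, ∀ x ∈ Z, T x ∈ Z) :
    ∃ (n m : ℕ) (e f : Fin n → V) (g : Fin m → V),
      (∀ i j, (inner ℝ (e i) (e j) : ℝ) = if i = j then 1 else 0) ∧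
      (∀ i j, (inner ℝ (f i) (f j) : ℝ) = if i = j then 1 else 0) ∧
      (∀ i j, (inner ℝ (g i) (g j) : ℝ) = if i = j then 1 else 0) ∧
      (∀ i j, (inner ℝ (e i) (f j) : ℝ) = 0) ∧
      (∀ i j, (inner ℝ (e i) (g j) : ℝ) = 0) ∧
      (∀ i j, (inner ℝ (f i) (g j) : ℝ) = 0) ∧
      (∀ i, e i ∈ Zᗮ) ∧ (∀ i, f i ∈ Zᗮ) ∧ (∀ j, g j ∈ Zᗮ) ∧
      Zᗮ = Submodule.span ℝ (Set.range e ∪ Set.range f ∪ Set.range g) ∧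
      (∀ T ∈ F, ∀ j, T (g j) = 0) ∧
      (∀ T ∈ F, ∀ i, ∃ c : ℝ, T (e i) = c • f i ∧ T (f i) = (-c) • e i) := by
  classical
  have hZperp : ∀ T ∈ F, ∀ x ∈ Zᗮ, T x ∈ Zᗮ := by
    intro T hT x hx
    rw [Submodule.mem_orthogonal]
    intro u hu
    rw [real_inner_comm, hskew T hT]
    have : (inner ℝ x (T u) : ℝ) = 0 := by
      rw [real_inner_comm]
      exact (Submodule.mem_orthogonal Z x).mp hx _ (hZinv T hT u hu)
    rw [this, neg_zero]
  set F' : Set ((Zᗮ : Submodule ℝ V) →ₗ[ℝ] (Zᗮ : Submodule ℝ V)) :=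
    {S | ∃ T ∈ F, ∀ x : Zᗮ, (S x : V) = T (x : V)} with hF'
  have hcomm' : ∀ S₁ ∈ F', ∀ S₂ ∈ F', S₁ ∘ₗ S₂ = S₂ ∘ₗ S₁ := by
    rintro S₁ ⟨T₁, hT₁, hc₁⟩ S₂ ⟨T₂, hT₂, hc₂⟩
    refine LinearMap.ext fun x => Subtype.ext ?_
    have : T₁ (T₂ (x : V)) = T₂ (T₁ (x : V)) :=
      congrFun (congrArg DFunLike.coe (hcomm T₁ hT₁ T₂ hT₂)) (x : V)
    simp only [LinearMap.comp_apply]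
    rw [hc₁, hc₂, hc₂, hc₁, this]
  have hskew' : ∀ S ∈ F', ∀ x y : Zᗮ, (inner ℝ (S x) y : ℝ) = -(inner ℝ x (S y) : ℝ) := by
    rintro S ⟨T, hT, hc⟩ x y
    rw [Submodule.coe_inner, Submodule.coe_inner, hc, hc, hskew T hT]
  have hfr : Module.finrank ℝ (Zᗮ : Submodule ℝ V) ≤ N := by
    have h1 := Z.finrank_add_finrank_orthogonal
    haveI : Nontrivial Z := Submodule.nontrivial_iff_ne_bot.mpr hZ0
    have h2 : 0 < Module.finrank ℝ Z := Module.finrank_pos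
    omega
  obtain ⟨n, m, e', f', g', hee, hff, hgg, hef, heg, hfg, hspan, hkill, hblock⟩ :=
    IH hfr F' hcomm' hskew'
  have hcoe : ∀ x y : (Zᗮ : Submodule ℝ V), (inner ℝ (x : V) (y : V) : ℝ) = inner ℝ x y :=
    fun x y => (Submodule.coe_inner _ _ _).symm
  refine ⟨n, m, fun i => ((e' i : Zᗮ) : V), fun i => ((f' i : Zᗮ) : V),
    fun j => ((g' j : Zᗮ) : V),
    fun i j => by rw [hcoe]; exact hee i j,
    fun i j => by rw [hcoe]; exact hff i j,
    fun i j => by rw [hcoe]; exact hgg i j,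
    fun i j => by rw [hcoe]; exact hef i j,
    fun i j => by rw [hcoe]; exact heg i j,
    fun i j => by rw [hcoe]; exact hfg i j,
    fun i => (e' i).2, fun i => (f' i).2, fun j => (g' j).2, ?_, ?_, ?_⟩
  · have hre : Set.range (fun i => ((e' i : Zᗮ) : V)) = Zᗮ.subtype '' Set.range e' := by
      rw [← Set.range_comp]; rfl
    have hrf : Set.range (fun i => ((f' i : Zᗮ) : V)) = Zᗮ.subtype '' Set.range f' := by
      rw [← Set.range_comp]; rfl
    have hrg : Set.range (fun j => ((g' j : Zᗮ) : V)) = Zᗮ.subtype '' Set.range g' := by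
      rw [← Set.range_comp]; rfl
    calc (Zᗮ : Submodule ℝ V) = Submodule.map Zᗮ.subtype ⊤ :=
          (Submodule.map_subtype_top Zᗮ).symm
      _ = Submodule.map Zᗮ.subtype
            (Submodule.span ℝ (Set.range e' ∪ Set.range f' ∪ Set.range g')) := by
          rw [hspan]
      _ = Submodule.span ℝ (Zᗮ.subtype '' (Set.range e' ∪ Set.range f' ∪ Set.range g')) :=
          Submodule.map_span _ _
      _ = Submodule.span ℝ (Set.range (fun i => ((e' i : Zᗮ) : V)) ∪
            Set.range (fun i => ((f' i : Zᗮ) : V)) ∪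
            Set.range (fun j => ((g' j : Zᗮ) : V))) := by
          rw [Set.image_union, Set.image_union, hre, hrf, hrg]
  · intro T hT j
    have hm : T.restrict (hZperp T hT) ∈ F' := ⟨T, hT, fun x => rfl⟩
    have h0 : T.restrict (hZperp T hT) (g' j) = 0 := hkill _ hm j
    calc T ((g' j : Zᗮ) : V) = ((T.restrict (hZperp T hT) (g' j) : Zᗮ) : V) := rfl
      _ = ((0 : Zᗮ) : V) := by rw [h0]
      _ = 0 := rfl
  · intro T hT i
    have hm : T.restrict (hZperp T hT) ∈ F' := ⟨T, hT, fun x => rfl⟩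
    obtain ⟨c, hc1, hc2⟩ := hblock _ hm i
    refine ⟨c, ?_, ?_⟩
    · calc T ((e' i : Zᗮ) : V) = ((T.restrict (hZperp T hT) (e' i) : Zᗮ) : V) := rfl
        _ = ((c • f' i : Zᗮ) : V) := by rw [hc1]
        _ = c • ((f' i : Zᗮ) : V) := rfl
    · calc T ((f' i : Zᗮ) : V) = ((T.restrict (hZperp T hT) (f' i) : Zᗮ) : V) := rfl
        _ = (((-c) • e' i : Zᗮ) : V) := by rw [hc2]
        _ = (-c) • ((e' i : Zᗮ) : V) := rfl

lemma blockdata_all : ∀ (N : ℕ) {V : Type u} [NormedAddCommGroup V] [InnerProductSpace ℝ V]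
    [FiniteDimensional ℝ V], Module.finrank ℝ V ≤ N →
    ∀ (F : Set (V →ₗ[ℝ] V)),
      (∀ S ∈ F, ∀ T ∈ F, S ∘ₗ T = T ∘ₗ S) →
      (∀ T ∈ F, ∀ x y : V, (inner ℝ (T x) y : ℝ) = -(inner ℝ x (T y) : ℝ)) →
      BlockData F := by
  intro N
  induction N with
  | zero =>
    intro V _ _ _ hN F _ _
    exact blockdata_of_subsingleton (Nat.le_zero.mp hN) F
  | succ N ih =>
    intro V _ _ _ hN F hcomm hskew
    by_cases htriv : Module.finrank ℝ V = 0
    · exact blockdata_of_subsingleton htriv F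
    haveI : Nontrivial V := Module.finrank_pos_iff.mp (Nat.pos_of_ne_zero htriv)
    obtain ⟨W, hW0, hWinv, hWmin⟩ := exists_minimal_invariant F
    rcases structure_on_minimal F hcomm hskew W hW0 hWinv hWmin with hzero |
      ⟨e₀, f₀, he₀W, hf₀W, hUW, he₀n, hf₀n, hef₀, hTblock⟩
    · -- kernel case: add one vector to g
      obtain ⟨x, hxW, hx0⟩ := Submodule.exists_mem_ne_zero_of_ne_bot hW0
      set w : V := ‖x‖⁻¹ • x with hw
      have hwW : w ∈ W := Submodule.smul_mem _ _ hxW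
      have hxne : ‖x‖ ≠ 0 := norm_ne_zero_iff.mpr hx0
      have hwnorm : ‖w‖ = 1 := by
        rw [hw, norm_smul, norm_inv, norm_norm, inv_mul_cancel₀ hxne]
      have hwn : (inner ℝ w w : ℝ) = 1 := by
        rw [real_inner_self_eq_norm_mul_norm, hwnorm, one_mul]
      have hw0 : w ≠ 0 := by
        intro h; rw [h, inner_zero_left] at hwn; exact one_ne_zero hwn.symm
      have hTw : ∀ T ∈ F, T w = 0 := fun T hT => by
        rw [hw, map_smul, hzero T hT x hxW, smul_zero]
      set Z : Submodule ℝ V := Submodule.span ℝ {w} with hZ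
      have hwZ : w ∈ Z := Submodule.mem_span_singleton_self w
      have hZ0 : Z ≠ ⊥ := by
        intro h; rw [h] at hwZ; exact hw0 hwZ
      have hZinv : ∀ T ∈ F, ∀ y ∈ Z, T y ∈ Z := by
        intro T hT y hy
        obtain ⟨a, ha⟩ := Submodule.mem_span_singleton.mp hy
        rw [← ha, map_smul, hTw T hT, smul_zero]
        exact Submodule.zero_mem _
      obtain ⟨n, m, e, f, g, hee, hff, hgg, hef, heg, hfg, heZ, hfZ, hgZ, hspan, hkill,
        hblock⟩ := step_orthogonal @ih F hcomm hskew hN Z hZ0 hZinv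
      have hcross : ∀ u, u ∈ Zᗮ → (inner ℝ w u : ℝ) = 0 :=
        fun u hu => (Submodule.mem_orthogonal Z u).mp hu w hwZ
      have hwg : ∀ j, (inner ℝ w (g j) : ℝ) = 0 := fun j => hcross _ (hgZ j)
      have hgw : ∀ j, (inner ℝ (g j) w : ℝ) = 0 := fun j => by
        rw [real_inner_comm]; exact hwg j
      have hew : ∀ i, (inner ℝ (e i) w : ℝ) = 0 := fun i => by
        rw [real_inner_comm]; exact hcross _ (heZ i)
      have hfw : ∀ i, (inner ℝ (f i) w : ℝ) = 0 := fun i => by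
        rw [real_inner_comm]; exact hcross _ (hfZ i)
      refine ⟨n, m+1, e, f, Fin.cons w g, hee, hff, ?_, hef, ?_, ?_, ?_, ?_, hblock⟩
      · intro i j
        induction i using Fin.cases with
        | zero =>
          induction j using Fin.cases with
          | zero => simpa using hwn
          | succ j => simp [hwg j, Ne.symm (Fin.succ_ne_zero j)]
        | succ i =>
          induction j using Fin.cases with
          | zero => simp [hgw i, Fin.succ_ne_zero i]
          | succ j => rw [Fin.cons_succ, Fin.cons_succ, hgg i j]; simp [Fin.succ_inj]
      · intro i j
        induction j using Fin.cases with
        | zero => simpa using hew i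
        | succ j => simpa using heg i j
      · intro i j
        induction j using Fin.cases with
        | zero => simpa using hfw i
        | succ j => simpa using hfg i j
      · rw [Fin.range_cons]
        refine le_antisymm le_top ?_
        rw [← Submodule.sup_orthogonal_of_hasOrthogonalProjection (K := Z)]
        refine sup_le ?_ ?_
        · rw [hZ]
          refine Submodule.span_mono ?_
          rw [Set.singleton_subset_iff]
          exact Set.mem_union_right _ (Set.mem_insert _ _)
        · rw [hspan]
          exact Submodule.span_mono (Set.union_subset_union_right _
            (Set.subset_insert _ _))
      · intro T hT j
        induction j using Fin.cases with
        | zero => simpa using hTw T hT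
        | succ j => simpa using hkill T hT j
    · -- block case: add one (e₀, f₀) pair
      have he₀0 : e₀ ≠ 0 := by
        intro h; rw [h, inner_zero_left] at he₀n; exact one_ne_zero he₀n.symm
      obtain ⟨n, m, e, f, g, hee, hff, hgg, hef, heg, hfg, heZ, hfZ, hgZ, hspan, hkill,
        hblock⟩ := step_orthogonal @ih F hcomm hskew hN W hW0 hWinv
      have hcross : ∀ v, v ∈ W → ∀ u, u ∈ Wᗮ → (inner ℝ v u : ℝ) = 0 :=
        fun v hv u hu => (Submodule.mem_orthogonal W u).mp hu v hv
      have hcross' : ∀ u, u ∈ Wᗮ → ∀ v, v ∈ W → (inner ℝ u v : ℝ) = 0 :=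
        fun u hu v hv => by rw [real_inner_comm]; exact hcross v hv u hu
      have hf₀e₀ : (inner ℝ f₀ e₀ : ℝ) = 0 := by rw [real_inner_comm]; exact hef₀
      refine ⟨n+1, m, Fin.cons e₀ e, Fin.cons f₀ f, g, ?_, ?_, hgg, ?_, ?_, ?_, ?_, hkill, ?_⟩
      · intro i j
        induction i using Fin.cases with
        | zero =>
          induction j using Fin.cases with
          | zero => simpa using he₀n
          | succ j => simp [hcross e₀ he₀W _ (heZ j), Ne.symm (Fin.succ_ne_zero j)]
        | succ i =>
          induction j using Fin.cases with
          | zero => simp [hcross' _ (heZ i) e₀ he₀W, Fin.succ_ne_zero i]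
          | succ j => rw [Fin.cons_succ, Fin.cons_succ, hee i j]; simp [Fin.succ_inj]
      · intro i j
        induction i using Fin.cases with
        | zero =>
          induction j using Fin.cases with
          | zero => simpa using hf₀n
          | succ j => simp [hcross f₀ hf₀W _ (hfZ j), Ne.symm (Fin.succ_ne_zero j)]
        | succ i =>
          induction j using Fin.cases with
          | zero => simp [hcross' _ (hfZ i) f₀ hf₀W, Fin.succ_ne_zero i]
          | succ j => rw [Fin.cons_succ, Fin.cons_succ, hff i j]; simp [Fin.succ_inj]
      · intro i j
        induction i using Fin.cases with
        | zero =>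
          induction j using Fin.cases with
          | zero => simpa using hef₀
          | succ j => simpa using hcross e₀ he₀W _ (hfZ j)
        | succ i =>
          induction j using Fin.cases with
          | zero => simpa using hcross' _ (heZ i) f₀ hf₀W
          | succ j => simpa using hef i j
      · intro i j
        induction i using Fin.cases with
        | zero => simpa using hcross e₀ he₀W _ (hgZ j)
        | succ i => simpa using heg i j
      · intro i j
        induction i using Fin.cases with
        | zero => simpa using hcross f₀ hf₀W _ (hgZ j)
        | succ i => simpa using hfg i j
      · rw [Fin.range_cons, Fin.range_cons]
        refine le_antisymm le_top ?_
        rw [← Submodule.sup_orthogonal_of_hasOrthogonalProjection (K := W)]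
        refine sup_le ?_ ?_
        · rw [← hUW]
          refine Submodule.span_le.mpr ?_
          rintro z (rfl | hz)
          · exact Submodule.subset_span (Set.mem_union_left _
              (Set.mem_union_left _ (Set.mem_insert _ _)))
          · rw [Set.mem_singleton_iff] at hz
            rw [hz]
            exact Submodule.subset_span (Set.mem_union_left _
              (Set.mem_union_right _ (Set.mem_insert _ _)))
        · rw [hspan]
          refine Submodule.span_mono ?_
          refine Set.union_subset_union_left _ ?_
          exact Set.union_subset_union (Set.subset_insert _ _) (Set.subset_insert _ _)
      · intro T hT i
        induction i using Fin.cases with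
        | zero =>
          obtain ⟨s, hs1, hs2⟩ := hTblock T hT
          exact ⟨s, by simpa using hs1, by simpa using hs2⟩
        | succ i =>
          obtain ⟨c, hc1, hc2⟩ := hblock T hT i
          exact ⟨c, by simpa using hc1, by simpa using hc2⟩



/-- A commuting family of skew-symmetric endomorphisms of a
finite-dimensional real inner ℝ product space can be simultaneously put in
block-diagonal form: there is an orthonormal basis
`{e_1, f_1, …, e_n, f_n} ∪ {basis of the common kernel}` such that every `T` in
the family acts on `span{e_i, f_i}` by the 2×2 block
`[[0, -λ_i(T)], [λ_i(T), 0]]` and kills the remaining basis vectors. -/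
theorem commuting_skew_family_block_diagonal {V : Type*} [NormedAddCommGroup V]
    [InnerProductSpace ℝ V] [FiniteDimensional ℝ V]
    (F : Set (V →ₗ[ℝ] V))
    (hcomm : ∀ S ∈ F, ∀ T ∈ F, S ∘ₗ T = T ∘ₗ S)
    (hskew : ∀ T ∈ F, ∀ x y : V, (inner ℝ (T x) y : ℝ) = -(inner ℝ x (T y) : ℝ)) :
    ∃ (n m : ℕ) (e f : Fin n → V) (g : Fin m → V)
      (lam : (V →ₗ[ℝ] V) → Fin n → ℝ),
      Orthonormal ℝ (Sum.elim (Sum.elim e f) g) ∧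
      Submodule.span ℝ (Set.range (Sum.elim (Sum.elim e f) g)) = ⊤ ∧
      (∀ T ∈ F, ∀ j : Fin m, T (g j) = 0) ∧
      (∀ T ∈ F, ∀ i : Fin n,
        T (e i) = lam T i • f i ∧ T (f i) = -(lam T i) • e i) := by
  classical
  obtain ⟨n, m, e, f, g, hee, hff, hgg, hef, heg, hfg, hspan, hkill, hblock⟩ :=
    blockdata_all (Module.finrank ℝ V) le_rfl F hcomm hskew
  refine ⟨n, m, e, f, g, fun T i => (inner ℝ (T (e i)) (f i) : ℝ), ?_, ?_, hkill, ?_⟩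
  · rw [orthonormal_iff_ite]
    rintro ((i | i) | i) ((j | j) | j) <;>
      simp only [Sum.elim_inl, Sum.elim_inr]
    · rw [hee i j]; simp
    · simp [hef i j]
    · simp [heg i j]
    · rw [real_inner_comm]; simp [hef j i]
    · rw [hff i j]; simp
    · simp [hfg i j]
    · rw [real_inner_comm]; simp [heg j i]
    · rw [real_inner_comm]; simp [hfg j i]
    · rw [hgg i j]; simp
  · rw [Set.Sum.elim_range, Set.Sum.elim_range]
    exact hspan
  · intro T hT i
    obtain ⟨c, hc1, hc2⟩ := hblock T hT i
    dsimp only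
    have hl : (inner ℝ (T (e i)) (f i) : ℝ) = c := by
      rw [hc1, real_inner_smul_left]
      have := hff i i
      rw [if_pos rfl] at this
      rw [this, mul_one]
    rw [hl, hc1, hc2]
    exact ⟨rfl, by rw [neg_smul]⟩
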